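/- Fix α ∈ (1,2], β > 0, Δ ∈ (0,1), δ > 0 and set δ₁ = δ/Δ. Let f : [0,1] → [0,1] be differentiable with |f(x)| ≤ β, |f'(x)| ≤ β and |f'(y) − f'(x)| ≤ β|y−x|^{α−1} for all x,y ∈ [0,1]. Let I_m = [(m−1)Δ, mΔ] with center x_m = (m−1/2)Δ for an integer m with 1 ≤ m ≤ 1/Δ. Let h⁽⁰⁾ be an integer closest to f(x_m)/δ and h⁽¹⁾ an integer closest to f'(x_m)/δ₁, and define p(x) = h⁽⁰⁾δ + h⁽¹⁾δ₁(x − x_m). Then for all x ∈ I_m, |f(x) − p(x)| ≤ (1/2^α)βΔ^α + (3/4)δ. -/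

import Mathlib

set_option maxHeartbeats 1000000 in
/-- local quantized-polynomial approximation, k = 1, α ∈ (1,2]. -/
theorem local_quantized_approx (α β Δ δ : ℝ) (hα₁ : 1 < α) (hα₂ : α ≤ 2) (hβ : 0 < β)
    (hΔ : Δ ∈ Set.Ioo (0:ℝ) 1) (hδ : 0 < δ)
    (f f' : ℝ → ℝ)
    (hrange : ∀ x ∈ Set.Icc (0:ℝ) 1, f x ∈ Set.Icc (0:ℝ) 1)
    (hdiff : ∀ x ∈ Set.Icc (0:ℝ) 1, HasDerivWithinAt f (f' x) (Set.Icc (0:ℝ) 1) x)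
    (hf : ∀ x ∈ Set.Icc (0:ℝ) 1, |f x| ≤ β)
    (hf' : ∀ x ∈ Set.Icc (0:ℝ) 1, |f' x| ≤ β)
    (hhold : ∀ x ∈ Set.Icc (0:ℝ) 1, ∀ y ∈ Set.Icc (0:ℝ) 1,
      |f' y - f' x| ≤ β * |y - x| ^ (α - 1))
    (m : ℕ) (hm₁ : 1 ≤ m) (hm₂ : (m : ℝ) ≤ 1 / Δ)
    (h0 h1 : ℤ)
    (hh0 : |(h0 : ℝ) - f ((m - 1/2) * Δ) / δ| ≤ 1/2)
    (hh1 : |(h1 : ℝ) - f' ((m - 1/2) * Δ) / (δ / Δ)| ≤ 1/2) :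
    ∀ x ∈ Set.Icc (((m : ℝ) - 1) * Δ) ((m : ℝ) * Δ),
      |f x - ((h0 : ℝ) * δ + (h1 : ℝ) * (δ / Δ) * (x - ((m : ℝ) - 1/2) * Δ))|
        ≤ (1 / 2 ^ α) * β * Δ ^ α + (3/4) * δ := by
  obtain ⟨hΔ0, hΔ1⟩ := hΔ
  intro x hx
  set xm : ℝ := ((m : ℝ) - 1/2) * Δ with hxm
  clear_value xm
  have hm1 : (1:ℝ) ≤ (m:ℝ) := by exact_mod_cast hm₁
  have hmΔ : (m:ℝ) * Δ ≤ 1 := by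
    rw [le_div_iff₀ hΔ0] at hm₂; linarith
  have hx0 : x ∈ Set.Icc (0:ℝ) 1 := by
    constructor
    · have : (0:ℝ) ≤ ((m:ℝ) - 1) * Δ := by nlinarith
      linarith [hx.1]
    · linarith [hx.2]
  have hxm0 : xm ∈ Set.Icc (0:ℝ) 1 := by
    rw [hxm]
    constructor
    · nlinarith
    · nlinarith
  have hdist : |x - xm| ≤ Δ / 2 := by
    rw [hxm, abs_le]
    constructor <;> [nlinarith [hx.1]; nlinarith [hx.2]]
  -- Taylor remainder bound
  have hseg : Set.Icc (min xm x) (max xm x) ⊆ Set.Icc (0:ℝ) 1 := by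
    apply Set.Icc_subset_Icc
    · exact le_min hxm0.1 hx0.1
    · exact max_le hxm0.2 hx0.2
  set C : ℝ := β * |x - xm| ^ (α - 1) with hC
  have hα1' : (0:ℝ) ≤ α - 1 := by linarith
  have key : |f x - f xm - f' xm * (x - xm)| ≤ C * |x - xm| := by
    have := Convex.norm_image_sub_le_of_norm_hasDerivWithin_le
      (f := fun t => f t - f' xm * t) (f' := fun t => f' t - f' xm)
      (s := Set.Icc (min xm x) (max xm x)) (C := C)
      (fun t ht => by
        convert ((hdiff t (hseg ht)).sub
          ((hasDerivWithinAt_id t _).const_mul (f' xm))).mono hseg using 1 <;> simp [funext_iff])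
      (fun t ht => by
        have h1 : |f' t - f' xm| ≤ β * |t - xm| ^ (α - 1) := hhold xm hxm0 t (hseg ht)
        have h2 : |t - xm| ≤ |x - xm| := by
          cases le_total xm x with
          | inl h =>
            rw [min_eq_left h, max_eq_right h] at ht
            rw [abs_of_nonneg (by linarith [ht.1] : (0:ℝ) ≤ t - xm),
              abs_of_nonneg (by linarith : (0:ℝ) ≤ x - xm)]
            linarith [ht.2]
          | inr h =>
            rw [min_eq_right h, max_eq_left h] at ht
            rw [abs_of_nonpos (by linarith [ht.2] : t - xm ≤ 0),
              abs_of_nonpos (by linarith : x - xm ≤ 0)]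
            linarith [ht.1]
        have h3 : |t - xm| ^ (α - 1) ≤ |x - xm| ^ (α - 1) :=
          Real.rpow_le_rpow (abs_nonneg _) h2 hα1'
        calc ‖f' t - f' xm‖ = |f' t - f' xm| := rfl
          _ ≤ β * |t - xm| ^ (α - 1) := h1
          _ ≤ C := by rw [hC]; nlinarith)
      (Convex.inter (convex_Ici _) (convex_Iic _))
      (Set.mem_Icc.2 ⟨min_le_left _ _, le_max_left _ _⟩)
      (Set.mem_Icc.2 ⟨min_le_right _ _, le_max_right _ _⟩)
    have heq : (f x - f' xm * x) - (f xm - f' xm * xm) = f x - f xm - f' xm * (x - xm) := by ring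
    calc |f x - f xm - f' xm * (x - xm)| = ‖(f x - f' xm * x) - (f xm - f' xm * xm)‖ := by
            rw [heq]; rfl
      _ ≤ C * ‖x - xm‖ := this
      _ = C * |x - xm| := rfl
  have hΔ2 : (0:ℝ) < Δ / 2 := by linarith
  have hrem : C * |x - xm| ≤ (1 / 2 ^ α) * β * Δ ^ α := by
    have h3 : |x - xm| ^ (α - 1) ≤ (Δ / 2) ^ (α - 1) :=
      Real.rpow_le_rpow (abs_nonneg _) hdist hα1'
    have h4 : C * |x - xm| ≤ β * (Δ/2) ^ (α - 1) * (Δ/2) := by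
      have hC0 : 0 ≤ C := mul_nonneg hβ.le (Real.rpow_nonneg (abs_nonneg _) _)
      have : C ≤ β * (Δ/2) ^ (α-1) := by rw [hC]; nlinarith
      nlinarith [abs_nonneg (x - xm), Real.rpow_nonneg (abs_nonneg (x-xm)) (α-1),
        Real.rpow_nonneg hΔ2.le (α-1)]
    have h5 : (Δ/2:ℝ) ^ (α-1) * (Δ/2) = (Δ/2) ^ α := by
      have h := Real.rpow_add hΔ2 (α-1) 1
      rw [Real.rpow_one, sub_add_cancel] at h
      exact h.symm
    have h6 : ((Δ:ℝ)/2) ^ α = Δ ^ α / 2 ^ α :=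
      Real.div_rpow hΔ0.le (by norm_num : (0:ℝ) ≤ 2) α
    calc C * |x - xm| ≤ β * ((Δ/2) ^ (α-1) * (Δ/2)) := by linarith [h4]
      _ = β * (Δ ^ α / 2 ^ α) := by rw [h5, h6]
      _ = (1 / 2 ^ α) * β * Δ ^ α := by ring
  -- quantization errors
  have hq0 : |f xm - (h0 : ℝ) * δ| ≤ δ / 2 := by
    rw [abs_sub_comm] at hh0
    have heq : f xm - (h0:ℝ) * δ = δ * (f xm / δ - (h0:ℝ)) := by
      rw [mul_sub, mul_div_cancel₀ _ hδ.ne']; ring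
    rw [heq, abs_mul, abs_of_pos hδ]
    have h := mul_le_mul_of_nonneg_left hh0 hδ.le
    linarith
  have hδΔ : (0:ℝ) < δ / Δ := div_pos hδ hΔ0
  have hq1 : |f' xm - (h1 : ℝ) * (δ / Δ)| ≤ (δ / Δ) / 2 := by
    rw [abs_sub_comm] at hh1
    have heq : f' xm - (h1:ℝ) * (δ/Δ) = (δ/Δ) * (f' xm / (δ/Δ) - (h1:ℝ)) := by
      rw [mul_sub, mul_div_cancel₀ _ hδΔ.ne']; ring
    rw [heq, abs_mul, abs_of_pos hδΔ]
    have h := mul_le_mul_of_nonneg_left hh1 hδΔ.le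
    linarith
  have hq1' : |(f' xm - (h1 : ℝ) * (δ / Δ)) * (x - xm)| ≤ δ / 4 := by
    rw [abs_mul]
    calc |f' xm - (h1:ℝ)*(δ/Δ)| * |x - xm| ≤ ((δ/Δ)/2) * (Δ/2) := by
          apply mul_le_mul hq1 hdist (abs_nonneg _) (by positivity)
      _ = δ / 4 := by
          rw [div_div, div_mul_div_comm, mul_comm δ Δ,
            show Δ * 2 * 2 = Δ * 4 by ring, mul_div_mul_left _ _ hΔ0.ne']
  have hsplit : f x - ((h0 : ℝ) * δ + (h1 : ℝ) * (δ / Δ) * (x - xm))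
      = (f x - f xm - f' xm * (x - xm)) + (f xm - (h0:ℝ) * δ)
        + (f' xm - (h1:ℝ) * (δ/Δ)) * (x - xm) := by ring
  rw [hsplit]
  calc |(f x - f xm - f' xm * (x - xm)) + (f xm - (h0:ℝ) * δ)
        + (f' xm - (h1:ℝ) * (δ/Δ)) * (x - xm)|
      ≤ |f x - f xm - f' xm * (x - xm)| + |f xm - (h0:ℝ) * δ|
        + |(f' xm - (h1:ℝ) * (δ/Δ)) * (x - xm)| := by
        exact (abs_add_le _ _).trans (by linarith [abs_add_le (f x - f xm - f' xm * (x - xm)) (f xm - (h0:ℝ) * δ)])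
    _ ≤ (1 / 2 ^ α) * β * Δ ^ α + δ/2 + δ/4 := by linarith [key.trans hrem]
    _ ≤ (1 / 2 ^ α) * β * Δ ^ α + (3/4) * δ := by linarith
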